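/- Vertical associativity for curried function composition: for α : arr c d, β : arr b cᵢ, γ : arr a bⱼ, with i < |c|, j < |b|, cᵢ the i-th entry of c, and bⱼ the j-th entry of b, one has (α ∘ᵢ β) ∘_{i+j} γ = α ∘ᵢ (β ∘ⱼ γ), after casting along the list equality (c •ᵢ b) •_{i+j} a = c •ᵢ (b •ⱼ a). -/

import Mathlib

def splice {T : Type*} (cl bl : List T) (k : ℕ) : List T :=
  cl.take k ++ bl ++ cl.drop (k+1)

def arr : List Type → Type → Type
  | [], d => d
  | t :: ts, d => t → arr ts d

def mapArr {t t' : Type} (f : t → t') : ∀ {bl : List Type}, arr bl t → arr bl t'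
  | [], g => f g
  | _ :: _, g => fun y => mapArr f (g y)

def compose : ∀ {cl bl : List Type} {t t' : Type},
    arr cl (t → t') → arr bl t → arr cl (arr bl t')
  | [], _, _, _, f, g => mapArr f g
  | _ :: _, _, _, _, f, g => fun x => compose (f x) g

theorem list_split {T : Type*} (cl : List T) (i : ℕ) (h : i < cl.length) :
    cl.take i ++ cl[i] :: cl.drop (i+1) = cl := by
  conv_rhs => rw [← List.take_append_drop i cl, List.drop_eq_getElem_cons h]

theorem arr_append (l1 l2 : List Type) (d : Type) :
    arr (l1 ++ l2) d = arr l1 (arr l2 d) := by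
  induction l1 with
  | nil => rfl
  | cons t ts ih => exact congrArg (fun X => t → X) ih

theorem arr_eq_split (cl : List Type) (d : Type) (i : ℕ) (hi : i < cl.length) :
    arr cl d = arr (cl.take i) (cl[i] → arr (cl.drop (i+1)) d) := by
  conv_lhs => rw [← list_split cl i hi]
  rw [arr_append]
  rfl

theorem arr_splice_eq (cl bl : List Type) (d : Type) (i : ℕ) :
    arr (splice cl bl i) d = arr (cl.take i) (arr bl (arr (cl.drop (i+1)) d)) := by
  simp [splice, arr_append]

def ocomp {cl bl : List Type} {d ci : Type} (i : ℕ) (hi : i < cl.length)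
    (hci : cl[i] = ci) (α : arr cl d) (β : arr bl ci) : arr (splice cl bl i) d :=
  cast (arr_splice_eq cl bl d i).symm
    (compose (cast (by rw [arr_eq_split cl d i hi, hci]) α) β)

theorem cast_fun {t A B : Type} (hAB : A = B) (h : (t → A) = (t → B)) (f : t → A) (x : t) :
    cast h f x = cast hAB (f x) := by subst hAB; rfl

theorem ocomp_zero {c : Type} {cs bl : List Type} {d : Type}
    (hi : 0 < (c :: cs).length) (α : arr (c :: cs) d) (β : arr bl c) :
    ocomp 0 hi rfl α β = cast (arr_append bl cs d).symm (mapArr α β) := rfl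

theorem ocomp_succ {c : Type} {cs bl : List Type} {d ci : Type} {k : ℕ}
    (hi : k+1 < (c :: cs).length) (hci : (c :: cs)[k+1] = ci)
    (α : arr (c :: cs) d) (β : arr bl ci) :
    ocomp (k+1) hi hci α β
      = fun (x : c) => ocomp k (Nat.lt_of_succ_lt_succ hi) hci (α x) β := by
  funext x
  show cast (arr_splice_eq (c::cs) bl d (k+1)).symm
      (compose (cast (by rw [arr_eq_split (c::cs) d (k+1) hi, hci]
        : arr (c::cs) d = arr ((c::cs).take (k+1)) (ci → arr ((c::cs).drop (k+2)) d)) α) β) x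
    = ocomp k (Nat.lt_of_succ_lt_succ hi) hci (α x) β
  refine (cast_fun (arr_splice_eq cs bl d k).symm _ _ x).trans ?_
  show cast (arr_splice_eq cs bl d k).symm
      (compose ((cast _ α : c → arr (cs.take k) (ci → arr (cs.drop (k+1)) d)) x) β) = _
  have hci' : cs[k]'(Nat.lt_of_succ_lt_succ hi) = ci := hci
  refine (congrArg (fun z : arr (cs.take k) (ci → arr (cs.drop (k+1)) d) =>
      cast (arr_splice_eq cs bl d k).symm (compose z β))
    (cast_fun (show arr cs d = arr (cs.take k) (ci → arr (cs.drop (k+1)) d) by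
    rw [arr_eq_split cs d k (Nat.lt_of_succ_lt_succ hi), hci']) _ α x)).trans ?_
  rfl

theorem lemC {bs cs : List Type} {b c d : Type} (α : c → arr cs d) (β : arr (b :: bs) c) :
    ∀ (al : List Type) (hle : al ++ (bs ++ cs) = (al ++ bs) ++ cs) (γ : arr al b),
    cast (congrArg (fun l => arr l d) hle)
      (cast (arr_append al (bs ++ cs) d).symm
        (mapArr (cast (arr_append (b :: bs) cs d).symm (mapArr α β)) γ))
    = cast (arr_append (al ++ bs) cs d).symm
        (mapArr α (cast (arr_append al bs c).symm (mapArr β γ)))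
  | [], hle, γ =>
      cast_fun (arr_append bs cs d).symm (arr_append (b :: bs) cs d).symm (mapArr α β) γ
  | a :: as, hle, γ => by
    have hle2 : a :: (as ++ (bs ++ cs)) = a :: ((as ++ bs) ++ cs) := hle
    injection hle2 with _ hle'
    funext y
    calc cast (congrArg (fun l => arr l d) hle)
          (cast (arr_append (a :: as) (bs ++ cs) d).symm
            (mapArr (cast (arr_append (b :: bs) cs d).symm (mapArr α β)) γ)) y
        = cast (congrArg (fun l => arr l d) hle')
            ((cast (arr_append (a :: as) (bs ++ cs) d).symm
              (mapArr (cast (arr_append (b :: bs) cs d).symm (mapArr α β)) γ)) y) :=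
          cast_fun (congrArg (fun l => arr l d) hle') (congrArg (fun l => arr l d) hle)
            (cast (arr_append (a :: as) (bs ++ cs) d).symm
              (mapArr (cast (arr_append (b :: bs) cs d).symm (mapArr α β)) γ)) y
      _ = cast (congrArg (fun l => arr l d) hle')
            (cast (arr_append as (bs ++ cs) d).symm
              (mapArr (cast (arr_append (b :: bs) cs d).symm (mapArr α β)) (γ y))) :=
          congrArg (cast (congrArg (fun l => arr l d) hle'))
            (cast_fun (arr_append as (bs ++ cs) d).symm (arr_append (a :: as) (bs ++ cs) d).symm
              (mapArr (cast (arr_append (b :: bs) cs d).symm (mapArr α β)) γ) y)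
      _ = cast (arr_append (as ++ bs) cs d).symm
            (mapArr α (cast (arr_append as bs c).symm (mapArr β (γ y)))) :=
          lemC α β as hle' (γ y)
      _ = cast (arr_append (as ++ bs) cs d).symm
            (mapArr α ((cast (arr_append (a :: as) bs c).symm (mapArr β γ)) y)) :=
          congrArg (fun z : arr (as ++ bs) c =>
              cast (arr_append (as ++ bs) cs d).symm (mapArr α z))
            (cast_fun (arr_append as bs c).symm (arr_append (a :: as) bs c).symm
              (mapArr β γ) y).symm
      _ = cast (arr_append ((a :: as) ++ bs) cs d).symm
            (mapArr α (cast (arr_append (a :: as) bs c).symm (mapArr β γ))) y :=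
          (cast_fun (arr_append (as ++ bs) cs d).symm (arr_append ((a :: as) ++ bs) cs d).symm
            (mapArr α (cast (arr_append (a :: as) bs c).symm (mapArr β γ))) y).symm

theorem lemB {cs : List Type} {c d : Type} (α : c → arr cs d) :
    ∀ (bl : List Type) (j : ℕ) (hj : j < bl.length) {al : List Type}
      (h1 : j < (bl ++ cs).length) (h2 : (bl ++ cs)[j]'h1 = bl[j])
      (hle : splice (bl ++ cs) al j = splice bl al j ++ cs)
      (β : arr bl c) (γ : arr al (bl[j])),
    cast (congrArg (fun l => arr l d) hle)
      (ocomp j h1 h2 (cast (arr_append bl cs d).symm (mapArr α β)) γ)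
    = cast (arr_append (splice bl al j) cs d).symm (mapArr α (ocomp j hj rfl β γ))
  | [], j, hj, al, h1, h2, hle, β, γ => absurd hj (Nat.not_lt_zero j)
  | b :: bs, 0, hj, al, h1, h2, hle, β, γ => lemC α β al hle γ
  | b :: bs, k+1, hj, al, h1, h2, hle, β, γ => by
    have hj' : k < bs.length := Nat.lt_of_succ_lt_succ hj
    have h1' : k < (bs ++ cs).length := Nat.lt_of_succ_lt_succ h1
    have hle2 : b :: splice (bs ++ cs) al k = b :: (splice bs al k ++ cs) := hle
    injection hle2 with _ hle'
    funext y
    calc (show arr (splice bs al k ++ cs) d from cast (congrArg (fun l => arr l d) hle)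
          (ocomp (k+1) h1 h2 (cast (arr_append (b :: bs) cs d).symm (mapArr α β)) γ) y)
        = cast (congrArg (fun l => arr l d) hle')
            ((ocomp (k+1) h1 h2 (cast (arr_append (b :: bs) cs d).symm (mapArr α β)) γ) y) :=
          cast_fun (congrArg (fun l => arr l d) hle') (congrArg (fun l => arr l d) hle)
            (ocomp (k+1) h1 h2 (cast (arr_append (b :: bs) cs d).symm (mapArr α β)) γ) y
      _ = cast (congrArg (fun l => arr l d) hle')
            (ocomp k h1' h2 ((cast (arr_append (b :: bs) cs d).symm (mapArr α β)) y) γ) :=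
          congrArg (cast (congrArg (fun l => arr l d) hle'))
            (congrFun (ocomp_succ h1 h2
              (cast (arr_append (b :: bs) cs d).symm (mapArr α β)) γ) y)
      _ = cast (congrArg (fun l => arr l d) hle')
            (ocomp k h1' h2 (cast (arr_append bs cs d).symm (mapArr α (β y))) γ) :=
          congrArg (fun z : arr (bs ++ cs) d =>
              cast (congrArg (fun l => arr l d) hle') (ocomp k h1' h2 z γ))
            (cast_fun (arr_append bs cs d).symm (arr_append (b :: bs) cs d).symm
              (mapArr α β) y)
      _ = cast (arr_append (splice bs al k) cs d).symm
            (mapArr α (ocomp k hj' rfl (β y) γ)) :=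
          lemB α bs k hj' h1' h2 hle' (β y) γ
      _ = cast (arr_append (splice bs al k) cs d).symm
            (mapArr α ((ocomp (k+1) hj rfl β γ) y)) :=
          congrArg (fun z : arr (splice bs al k) c =>
              cast (arr_append (splice bs al k) cs d).symm (mapArr α z))
            (congrFun (ocomp_succ hj rfl β γ) y).symm
      _ = (show arr (splice bs al k ++ cs) d from cast (arr_append (splice (b :: bs) al (k+1)) cs d).symm
            (mapArr α (ocomp (k+1) hj rfl β γ)) y) :=
          (cast_fun (arr_append (splice bs al k) cs d).symm
            (arr_append (splice (b :: bs) al (k+1)) cs d).symm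
            (mapArr α (ocomp (k+1) hj rfl β γ)) y).symm

theorem aux_assoc {d : Type} :
    ∀ (cl : List Type) {bl al : List Type} (i j m : ℕ) (hm : m = i + j)
      (hi : i < cl.length) (hj : j < bl.length)
      (h1 : m < (splice cl bl i).length) (h2 : (splice cl bl i)[m]'h1 = bl[j])
      (hle : splice (splice cl bl i) al m = splice cl (splice bl al j) i)
      (α : arr cl d) (β : arr bl (cl[i])) (γ : arr al (bl[j])),
      cast (congrArg (fun l => arr l d) hle)
        (ocomp m h1 h2 (ocomp i hi rfl α β) γ)
      = ocomp i hi rfl α (ocomp j hj rfl β γ)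
  | [], bl, al, i, j, m, hm, hi, _, _, _, _, _, _, _ => absurd hi (Nat.not_lt_zero i)
  | c :: cs, bl, al, 0, j, m, hm, hi, hj, h1, h2, hle, α, β, γ => by
    rw [Nat.zero_add] at hm
    subst hm
    exact lemB α bl _ hj h1 h2 hle β γ
  | c :: cs, bl, al, i+1, j, m, hm, hi, hj, h1, h2, hle, α, β, γ => by
    rw [Nat.succ_add] at hm
    subst hm
    have hi' : i < cs.length := Nat.lt_of_succ_lt_succ hi
    have h1' : i + j < (splice cs bl i).length := Nat.lt_of_succ_lt_succ h1
    have hle2 : c :: splice (splice cs bl i) al (i + j)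
        = c :: splice cs (splice bl al j) i := hle
    injection hle2 with _ hle'
    funext x
    calc (show arr (splice cs (splice bl al j) i) d from cast (congrArg (fun l => arr l d) hle)
          (ocomp (i+j+1) h1 h2 (ocomp (i+1) hi rfl α β) γ) x)
        = cast (congrArg (fun l => arr l d) hle')
            ((ocomp (i+j+1) h1 h2 (ocomp (i+1) hi rfl α β) γ) x) :=
          cast_fun (congrArg (fun l => arr l d) hle') (congrArg (fun l => arr l d) hle)
            (ocomp (i+j+1) h1 h2 (ocomp (i+1) hi rfl α β) γ) x
      _ = cast (congrArg (fun l => arr l d) hle')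
            (ocomp (i+j) h1' h2 ((ocomp (i+1) hi rfl α β) x) γ) :=
          congrArg (cast (congrArg (fun l => arr l d) hle'))
            (congrFun (ocomp_succ h1 h2 (ocomp (i+1) hi rfl α β) γ) x)
      _ = cast (congrArg (fun l => arr l d) hle')
            (ocomp (i+j) h1' h2 (ocomp i hi' rfl (α x) β) γ) :=
          congrArg (fun z : arr (splice cs bl i) d =>
              cast (congrArg (fun l => arr l d) hle') (ocomp (i+j) h1' h2 z γ))
            (congrFun (ocomp_succ hi rfl α β) x)
      _ = ocomp i hi' rfl (α x) (ocomp j hj rfl β γ) :=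
          aux_assoc cs i j (i+j) rfl hi' hj h1' h2 hle' (α x) β γ
      _ = (show arr (splice cs (splice bl al j) i) d from (ocomp (i+1) hi rfl α (ocomp j hj rfl β γ)) x) :=
          (congrFun (ocomp_succ hi rfl α (ocomp j hj rfl β γ)) x).symm


theorem vertical_assoc_ocomp {cl bl al : List Type} {d : Type} {i j : ℕ}
    (hi : i < cl.length) (hj : j < bl.length)
    (h1 : i + j < (splice cl bl i).length) (h2 : (splice cl bl i)[i+j] = bl[j])
    (hle : splice (splice cl bl i) al (i + j) = splice cl (splice bl al j) i)
    (α : arr cl d) (β : arr bl cl[i]) (γ : arr al bl[j]) :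
    cast (congrArg (fun l => arr l d) hle)
      (ocomp (i + j) h1 h2 (ocomp i hi rfl α β) γ) =
    ocomp i hi rfl α (ocomp j hj rfl β γ) := by
  exact aux_assoc cl i j (i+j) rfl hi hj h1 h2 hle α β γ
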